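/- Let f : ℝ × ℝⁿ × ℝᵖ → ℝⁿ, γ : ℝ × ℝⁿ × ℝᵖ → ℝ and Γ : ℝⁿ × ℝᵖ → ℝ be continuously differentiable, and let x : ℝᵖ × [0,T] → ℝⁿ be twice continuously differentiable with ∂x/∂t(θ,t) = f(t, x(θ,t), θ) and x(θ,0) = x₀ independent of θ. Define J(θ) = ∫₀ᵀ γ(t, x(θ,t), θ) dt + Γ(x(θ,T), θ). Fix θ₀ ∈ ℝᵖ and suppose λ : [0,T] → ℝⁿ is continuously differentiable and satisfies the backward adjoint equation λ'(t)ᵀ = −λ(t)ᵀ D_x f(t, x(θ₀,t), θ₀) − D_x γ(t, x(θ₀,t), θ₀) for all t ∈ [0,T] with terminal condition λ(T)ᵀ = D_x Γ(x(θ₀,T), θ₀). Then the derivative of J at θ₀ equals dJ/dθ = D_θ Γ(x(θ₀,T), θ₀) + ∫₀ᵀ [λ(t)ᵀ D_θ f(t, x(θ₀,t), θ₀) + D_θ γ(t, x(θ₀,t), θ₀)] dt, where D_x, D_θ denote partial Fréchet derivatives in the state and parameter arguments and λ(t)ᵀ M denotes the composition of the linear map M with the linear functional y ↦ ⟨λ(t),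 y⟩. -/

import Mathlib

open MeasureTheory Set Metric

private lemma clm_split₂ {E P G : Type*} [NormedAddCommGroup E] [NormedSpace ℝ E]
    [NormedAddCommGroup P] [NormedSpace ℝ P] [NormedAddCommGroup G] [NormedSpace ℝ G]
    (D : E × P →L[ℝ] G) (v : P →L[ℝ] E) :
    D.comp (v.prod (ContinuousLinearMap.id ℝ P))
      = (D.comp ((ContinuousLinearMap.id ℝ E).prod (0 : E →L[ℝ] P))).comp v
        + D.comp ((0 : P →L[ℝ] E).prod (ContinuousLinearMap.id ℝ P)) := by
  ext w
  simp only [ContinuousLinearMap.add_apply, ContinuousLinearMap.comp_apply,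
    ContinuousLinearMap.prod_apply, ContinuousLinearMap.id_apply, ContinuousLinearMap.zero_apply]
  rw [← map_add, Prod.mk_add_mk]
  simp

private lemma clm_split₃ {A E P G : Type*} [NormedAddCommGroup A] [NormedSpace ℝ A]
    [NormedAddCommGroup E] [NormedSpace ℝ E]
    [NormedAddCommGroup P] [NormedSpace ℝ P] [NormedAddCommGroup G] [NormedSpace ℝ G]
    (D : A × E × P →L[ℝ] G) (v : P →L[ℝ] E) :
    D.comp ((0 : P →L[ℝ] A).prod (v.prod (ContinuousLinearMap.id ℝ P)))
      = (D.comp ((0 : E →L[ℝ] A).prod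
            ((ContinuousLinearMap.id ℝ E).prod (0 : E →L[ℝ] P)))).comp v
        + D.comp ((0 : P →L[ℝ] A).prod
            ((0 : P →L[ℝ] E).prod (ContinuousLinearMap.id ℝ P))) := by
  ext w
  simp only [ContinuousLinearMap.add_apply, ContinuousLinearMap.comp_apply,
    ContinuousLinearMap.prod_apply, ContinuousLinearMap.id_apply, ContinuousLinearMap.zero_apply]
  rw [← map_add, Prod.mk_add_mk, Prod.mk_add_mk]
  simp


set_option maxHeartbeats 2000000 in
/-- **Theorem 2 (Path-wise Backward Adjoint Gradients), deterministic specialization.**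
For `J(θ) = ∫₀ᵀ γ(t, x(θ,t), θ) dt + Γ(x(θ,T), θ)` with `ẋ = f(t, x, θ)`,
`x(θ,0) = x₀` independent of `θ`, if the adjoint `λ` satisfies
`λ'(t)ᵀ = −λ(t)ᵀ D_x f − D_x γ` with `λ(T)ᵀ = D_x Γ`, then
`dJ/dθ|_{θ₀} = D_θ Γ + ∫₀ᵀ [λ(t)ᵀ D_θ f + D_θ γ] dt`.
Here `λ(t)ᵀ M` is the composition of `M` with the functional `y ↦ ⟨λ(t), y⟩`,
i.e. `(innerSL ℝ (l t)).comp M`. -/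
theorem backward_adjoint_gradient
    (n p : ℕ) (T : ℝ) (hT : 0 < T)
    (f : ℝ → EuclideanSpace ℝ (Fin n) → EuclideanSpace ℝ (Fin p) → EuclideanSpace ℝ (Fin n))
    (γ : ℝ → EuclideanSpace ℝ (Fin n) → EuclideanSpace ℝ (Fin p) → ℝ)
    (Γ : EuclideanSpace ℝ (Fin n) → EuclideanSpace ℝ (Fin p) → ℝ)
    (hf : ContDiff ℝ 1
      (fun q : ℝ × EuclideanSpace ℝ (Fin n) × EuclideanSpace ℝ (Fin p) => f q.1 q.2.1 q.2.2))
    (hγ : ContDiff ℝ 1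
      (fun q : ℝ × EuclideanSpace ℝ (Fin n) × EuclideanSpace ℝ (Fin p) => γ q.1 q.2.1 q.2.2))
    (hΓ : ContDiff ℝ 1
      (fun q : EuclideanSpace ℝ (Fin n) × EuclideanSpace ℝ (Fin p) => Γ q.1 q.2))
    (x : EuclideanSpace ℝ (Fin p) → ℝ → EuclideanSpace ℝ (Fin n))
    (hx : ContDiffOn ℝ 2
      (fun q : EuclideanSpace ℝ (Fin p) × ℝ => x q.1 q.2)
      (Set.univ ×ˢ Set.Icc (0 : ℝ) T))
    (hode : ∀ θ, ∀ t ∈ Set.Icc (0 : ℝ) T,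
      HasDerivWithinAt (x θ) (f t (x θ t) θ) (Set.Icc (0 : ℝ) T) t)
    (x₀ : EuclideanSpace ℝ (Fin n)) (hx0 : ∀ θ, x θ 0 = x₀)
    (θ₀ : EuclideanSpace ℝ (Fin p))
    (l l' : ℝ → EuclideanSpace ℝ (Fin n))
    (hl : ∀ t ∈ Set.Icc (0 : ℝ) T, HasDerivWithinAt l (l' t) (Set.Icc (0 : ℝ) T) t)
    (hl' : ContinuousOn l' (Set.Icc (0 : ℝ) T))
    (hadj : ∀ t ∈ Set.Icc (0 : ℝ) T,
      innerSL ℝ (l' t)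
        = -((innerSL ℝ (l t)).comp (fderiv ℝ (fun y => f t y θ₀) (x θ₀ t)))
          - fderiv ℝ (fun y => γ t y θ₀) (x θ₀ t))
    (hlT : innerSL ℝ (l T) = fderiv ℝ (fun y => Γ y θ₀) (x θ₀ T)) :
    HasFDerivAt (fun θ => (∫ t in (0 : ℝ)..T, γ t (x θ t) θ) + Γ (x θ T) θ)
      (fderiv ℝ (fun θ => Γ (x θ₀ T) θ) θ₀
        + ∫ t in (0 : ℝ)..T,
            ((innerSL ℝ (l t)).comp (fderiv ℝ (fun θ => f t (x θ₀ t) θ) θ₀)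
              + fderiv ℝ (fun θ => γ t (x θ₀ t) θ) θ₀))
      θ₀ := by
  have hT' : (0:ℝ) ≤ T := hT.le
  have hTmem : T ∈ Set.Icc (0:ℝ) T := ⟨hT', le_refl T⟩
  set S : Set (EuclideanSpace ℝ (Fin p) × ℝ) := Set.univ ×ˢ Set.Icc (0:ℝ) T with hSdef
  have hSuniq : UniqueDiffOn ℝ S := uniqueDiffOn_univ.prod (uniqueDiffOn_Icc hT)
  set X : EuclideanSpace ℝ (Fin p) × ℝ → EuclideanSpace ℝ (Fin n) :=
    fun q => x q.1 q.2 with hXdef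
  set F := fderivWithin ℝ X S with hFdef
  have hFc : ContinuousOn F S := hx.continuousOn_fderivWithin hSuniq one_le_two
  set V : EuclideanSpace ℝ (Fin p) → ℝ →
      (EuclideanSpace ℝ (Fin p) →L[ℝ] EuclideanSpace ℝ (Fin n)) :=
    fun θ t => (F (θ, t)).comp
      ((ContinuousLinearMap.id ℝ (EuclideanSpace ℝ (Fin p))).prod
        (0 : EuclideanSpace ℝ (Fin p) →L[ℝ] ℝ)) with hVdef
  have hVd : ∀ θ, ∀ t ∈ Set.Icc (0:ℝ) T, HasFDerivAt (fun θ' => x θ' t) (V θ t) θ := by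
    intro θ t ht
    have hmem : ((θ, t) : EuclideanSpace ℝ (Fin p) × ℝ) ∈ S := ⟨Set.mem_univ θ, ht⟩
    have hXd : HasFDerivWithinAt X (F (θ, t)) S (θ, t) :=
      ((hx.differentiableOn two_ne_zero) (θ, t) hmem).hasFDerivWithinAt
    have hg : HasFDerivAt (fun θ' : EuclideanSpace ℝ (Fin p) => ((θ', t) : _ × ℝ))
        ((ContinuousLinearMap.id ℝ (EuclideanSpace ℝ (Fin p))).prod
          (0 : EuclideanSpace ℝ (Fin p) →L[ℝ] ℝ)) θ :=
      (hasFDerivAt_id θ).prodMk (hasFDerivAt_const t θ)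
    have hmaps : Set.MapsTo (fun θ' : EuclideanSpace ℝ (Fin p) => ((θ', t) : _ × ℝ))
        Set.univ S := fun θ' _ => ⟨Set.mem_univ θ', ht⟩
    have hcomp := HasFDerivWithinAt.comp θ hXd hg.hasFDerivWithinAt hmaps
    rw [hasFDerivWithinAt_univ] at hcomp
    exact hcomp
  have hVc : ContinuousOn (fun q : EuclideanSpace ℝ (Fin p) × ℝ => V q.1 q.2) S :=
    hFc.clm_comp continuousOn_const
  have hfd : ∀ q, HasFDerivAt (fun q : ℝ × EuclideanSpace ℝ (Fin n) × EuclideanSpace ℝ (Fin p) =>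
      f q.1 q.2.1 q.2.2) (fderiv ℝ (fun q : ℝ × EuclideanSpace ℝ (Fin n) ×
      EuclideanSpace ℝ (Fin p) => f q.1 q.2.1 q.2.2) q) q :=
    fun q => (hf.differentiable one_ne_zero q).hasFDerivAt
  have hγd : ∀ q, HasFDerivAt (fun q : ℝ × EuclideanSpace ℝ (Fin n) × EuclideanSpace ℝ (Fin p) =>
      γ q.1 q.2.1 q.2.2) (fderiv ℝ (fun q : ℝ × EuclideanSpace ℝ (Fin n) ×
      EuclideanSpace ℝ (Fin p) => γ q.1 q.2.1 q.2.2) q) q :=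
    fun q => (hγ.differentiable one_ne_zero q).hasFDerivAt
  set Df := fderiv ℝ (fun q : ℝ × EuclideanSpace ℝ (Fin n) × EuclideanSpace ℝ (Fin p) =>
    f q.1 q.2.1 q.2.2) with hDfdef
  set Dγ := fderiv ℝ (fun q : ℝ × EuclideanSpace ℝ (Fin n) × EuclideanSpace ℝ (Fin p) =>
    γ q.1 q.2.1 q.2.2) with hDγdef
  have hDfc : Continuous Df := hf.continuous_fderiv one_ne_zero
  have hDγc : Continuous Dγ := hγ.continuous_fderiv one_ne_zero
  have hlc : ContinuousOn l (Set.Icc (0:ℝ) T) := fun t ht => (hl t ht).continuousWithinAt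
  have hxc : ∀ θ, ContinuousOn (x θ) (Set.Icc (0:ℝ) T) :=
    fun θ t ht => (hode θ t ht).continuousWithinAt
  have hfθc : ∀ θ, ContinuousOn (fun t => f t (x θ t) θ) (Set.Icc (0:ℝ) T) := fun θ =>
    hf.continuous.comp_continuousOn (continuousOn_id.prodMk ((hxc θ).prodMk continuousOn_const))
  set g : EuclideanSpace ℝ (Fin p) → ℝ → ℝ := fun θ t =>
    γ t (x θ t) θ + ((inner ℝ (l t) (f t (x θ t) θ) : ℝ) + (inner ℝ (l' t) (x θ t) : ℝ)) with hgdef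
  have hgγc : ∀ θ, ContinuousOn (fun t => γ t (x θ t) θ) (Set.Icc (0:ℝ) T) := fun θ =>
    hγ.continuous.comp_continuousOn (continuousOn_id.prodMk ((hxc θ).prodMk continuousOn_const))
  have hψc : ∀ θ, ContinuousOn
      (fun t => (inner ℝ (l t) (f t (x θ t) θ) : ℝ) + (inner ℝ (l' t) (x θ t) : ℝ))
      (Set.Icc (0:ℝ) T) := fun θ =>
    (hlc.inner (hfθc θ)).add (hl'.inner (hxc θ))
  have hγint : ∀ θ, IntervalIntegrable (fun t => γ t (x θ t) θ) volume 0 T := by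
    intro θ
    apply ContinuousOn.intervalIntegrable
    rw [Set.uIcc_of_le hT']
    exact hgγc θ
  have hψint : ∀ θ, IntervalIntegrable
      (fun t => (inner ℝ (l t) (f t (x θ t) θ) : ℝ) + (inner ℝ (l' t) (x θ t) : ℝ)) volume 0 T := by
    intro θ
    apply ContinuousOn.intervalIntegrable
    rw [Set.uIcc_of_le hT']
    exact hψc θ
  have hFTC : ∀ θ, (∫ t in (0:ℝ)..T,
      ((inner ℝ (l t) (f t (x θ t) θ) : ℝ) + (inner ℝ (l' t) (x θ t) : ℝ)))
      = (inner ℝ (l T) (x θ T) : ℝ) - (inner ℝ (l 0) x₀ : ℝ) := by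
    intro θ
    have hderiv : ∀ t ∈ Set.Ioo (0:ℝ) T,
        HasDerivWithinAt (fun t => (inner ℝ (l t) (x θ t) : ℝ))
          ((inner ℝ (l t) (f t (x θ t) θ) : ℝ) + (inner ℝ (l' t) (x θ t) : ℝ)) (Set.Ioi t) t := by
      intro t ht
      have hmem : t ∈ Set.Icc (0:ℝ) T := ⟨ht.1.le, ht.2.le⟩
      have h1 := HasDerivWithinAt.inner ℝ (hl t hmem) (hode θ t hmem)
      exact h1.mono_of_mem_nhdsWithin (Icc_mem_nhdsGT_of_mem ⟨hmem.1, ht.2⟩)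
    have hcont : ContinuousOn (fun t => (inner ℝ (l t) (x θ t) : ℝ)) (Set.Icc (0:ℝ) T) :=
      hlc.inner (hxc θ)
    have h2 := intervalIntegral.integral_eq_sub_of_hasDeriv_right_of_le hT' hcont hderiv (hψint θ)
    rw [hx0 θ] at h2
    exact h2
  have hEq : (fun θ => (∫ t in (0 : ℝ)..T, γ t (x θ t) θ) + Γ (x θ T) θ)
      = fun θ => (∫ t in (0:ℝ)..T, g θ t)
          + ((Γ (x θ T) θ - (inner ℝ (l T) (x θ T) : ℝ)) + (inner ℝ (l 0) x₀ : ℝ)) := by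
    funext θ
    have h1 : (∫ t in (0:ℝ)..T, g θ t)
        = (∫ t in (0:ℝ)..T, γ t (x θ t) θ)
          + ∫ t in (0:ℝ)..T,
              ((inner ℝ (l t) (f t (x θ t) θ) : ℝ) + (inner ℝ (l' t) (x θ t) : ℝ)) :=
      intervalIntegral.integral_add (hγint θ) (hψint θ)
    rw [h1, hFTC θ]; ring
  rw [hEq]
  -- derivative of the terminal part
  have hvT := hVd θ₀ T hTmem
  have hB : HasFDerivAt
      (fun θ => (Γ (x θ T) θ - (inner ℝ (l T) (x θ T) : ℝ)) + (inner ℝ (l 0) x₀ : ℝ))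
      (fderiv ℝ (fun θ => Γ (x θ₀ T) θ) θ₀) θ₀ := by
    have hDq := (hΓ.differentiable one_ne_zero (x θ₀ T, θ₀)).hasFDerivAt
    set DΓ := fderiv ℝ (fun q : EuclideanSpace ℝ (Fin n) × EuclideanSpace ℝ (Fin p) =>
      Γ q.1 q.2) (x θ₀ T, θ₀) with hDΓdef
    have hin1 : HasFDerivAt (fun θ => ((x θ T, θ) : EuclideanSpace ℝ (Fin n) × EuclideanSpace ℝ (Fin p)))
        ((V θ₀ T).prod (ContinuousLinearMap.id ℝ (EuclideanSpace ℝ (Fin p)))) θ₀ :=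
      hvT.prodMk (hasFDerivAt_id θ₀)
    have h1 : HasFDerivAt (fun θ => Γ (x θ T) θ)
        (DΓ.comp ((V θ₀ T).prod (ContinuousLinearMap.id ℝ (EuclideanSpace ℝ (Fin p))))) θ₀ :=
      by exact HasFDerivAt.comp (f := fun θ => ((x θ T, θ) :
        EuclideanSpace ℝ (Fin n) × EuclideanSpace ℝ (Fin p))) θ₀ hDq hin1
    have h2 : HasFDerivAt (fun θ => (inner ℝ (l T) (x θ T) : ℝ))
        ((innerSL ℝ (l T)).comp (V θ₀ T)) θ₀ :=
      ((innerSL ℝ (l T)).hasFDerivAt).comp θ₀ hvT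
    have hQ : HasFDerivAt (fun y => Γ y θ₀)
        (DΓ.comp ((ContinuousLinearMap.id ℝ (EuclideanSpace ℝ (Fin n))).prod
          (0 : EuclideanSpace ℝ (Fin n) →L[ℝ] EuclideanSpace ℝ (Fin p)))) (x θ₀ T) :=
      by
      have hin : HasFDerivAt (fun y => ((y, θ₀) : EuclideanSpace ℝ (Fin n) × EuclideanSpace ℝ (Fin p)))
          ((ContinuousLinearMap.id ℝ (EuclideanSpace ℝ (Fin n))).prod
            (0 : EuclideanSpace ℝ (Fin n) →L[ℝ] EuclideanSpace ℝ (Fin p))) (x θ₀ T) :=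
        (hasFDerivAt_id _).prodMk (hasFDerivAt_const θ₀ _)
      exact hDq.comp (x θ₀ T) hin
    have hP : HasFDerivAt (fun θ => Γ (x θ₀ T) θ)
        (DΓ.comp ((0 : EuclideanSpace ℝ (Fin p) →L[ℝ] EuclideanSpace ℝ (Fin n)).prod
          (ContinuousLinearMap.id ℝ (EuclideanSpace ℝ (Fin p))))) θ₀ :=
      by
      have hin : HasFDerivAt (fun θ => ((x θ₀ T, θ) : EuclideanSpace ℝ (Fin n) × EuclideanSpace ℝ (Fin p)))
          ((0 : EuclideanSpace ℝ (Fin p) →L[ℝ] EuclideanSpace ℝ (Fin n)).prod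
            (ContinuousLinearMap.id ℝ (EuclideanSpace ℝ (Fin p)))) θ₀ :=
        (hasFDerivAt_const (x θ₀ T) θ₀).prodMk (hasFDerivAt_id θ₀)
      exact hDq.comp θ₀ hin
    have hQf : innerSL ℝ (l T)
        = DΓ.comp ((ContinuousLinearMap.id ℝ (EuclideanSpace ℝ (Fin n))).prod
          (0 : EuclideanSpace ℝ (Fin n) →L[ℝ] EuclideanSpace ℝ (Fin p))) := by
      rw [hlT, hQ.fderiv]
    have h3 := (h1.sub h2).add_const (inner ℝ (l 0) x₀ : ℝ)
    refine h3.congr_fderiv ?_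
    rw [hP.fderiv, clm_split₂ DΓ (V θ₀ T), ← hQf]
    abel
  -- derivative of the integral part
  have hA : HasFDerivAt (fun θ => ∫ t in (0:ℝ)..T, g θ t)
      (∫ t in (0 : ℝ)..T,
            ((innerSL ℝ (l t)).comp (fderiv ℝ (fun θ => f t (x θ₀ t) θ) θ₀)
              + fderiv ℝ (fun θ => γ t (x θ₀ t) θ) θ₀)) θ₀ := by
    set μ : Measure ℝ := volume.restrict (Set.Ioc 0 T) with hμdef
    set M : EuclideanSpace ℝ (Fin p) → ℝ →
        (EuclideanSpace ℝ (Fin p) →L[ℝ] ℝ × EuclideanSpace ℝ (Fin n) × EuclideanSpace ℝ (Fin p)) :=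
      fun θ t => (0 : EuclideanSpace ℝ (Fin p) →L[ℝ] ℝ).prod
        ((V θ t).prod (ContinuousLinearMap.id ℝ (EuclideanSpace ℝ (Fin p)))) with hMdef
    set G : EuclideanSpace ℝ (Fin p) → ℝ → (EuclideanSpace ℝ (Fin p) →L[ℝ] ℝ) := fun θ t =>
      (Dγ (t, x θ t, θ)).comp (M θ t)
      + ((innerSL ℝ (l t)).comp ((Df (t, x θ t, θ)).comp (M θ t))
        + (innerSL ℝ (l' t)).comp (V θ t)) with hGdef
    have h_diff : ∀ t ∈ Set.Icc (0:ℝ) T, ∀ θ, HasFDerivAt (fun θ' => g θ' t) (G θ t) θ := by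
      intro t ht θ
      have hc : HasFDerivAt (fun θ' : EuclideanSpace ℝ (Fin p) =>
          ((t, x θ' t, θ') : ℝ × EuclideanSpace ℝ (Fin n) × EuclideanSpace ℝ (Fin p)))
          (M θ t) θ :=
        (hasFDerivAt_const t θ).prodMk ((hVd θ t ht).prodMk (hasFDerivAt_id θ))
      have h1 : HasFDerivAt (fun θ' => γ t (x θ' t) θ')
          ((Dγ (t, x θ t, θ)).comp (M θ t)) θ := by have := (hγd (t, x θ t, θ)).comp θ hc; exact this
      have h2f : HasFDerivAt (fun θ' => f t (x θ' t) θ')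
          ((Df (t, x θ t, θ)).comp (M θ t)) θ := by have := (hfd (t, x θ t, θ)).comp θ hc; exact this
      have h2 : HasFDerivAt (fun θ' => (inner ℝ (l t) (f t (x θ' t) θ') : ℝ))
          ((innerSL ℝ (l t)).comp ((Df (t, x θ t, θ)).comp (M θ t))) θ :=
        ((innerSL ℝ (l t)).hasFDerivAt).comp θ h2f
      have h3 : HasFDerivAt (fun θ' => (inner ℝ (l' t) (x θ' t) : ℝ))
          ((innerSL ℝ (l' t)).comp (V θ t)) θ :=
        ((innerSL ℝ (l' t)).hasFDerivAt).comp θ (hVd θ t ht)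
      exact h1.add (h2.add h3)
    have hKsub : (Metric.closedBall θ₀ 1 ×ˢ Set.Icc (0:ℝ) T) ⊆ S :=
      fun q hq => ⟨Set.mem_univ _, hq.2⟩
    have htriple : ContinuousOn (fun q : EuclideanSpace ℝ (Fin p) × ℝ =>
        ((q.2, x q.1 q.2, q.1) : ℝ × EuclideanSpace ℝ (Fin n) × EuclideanSpace ℝ (Fin p))) S :=
      (continuous_snd.continuousOn).prodMk ((hx.continuousOn).prodMk (continuous_fst.continuousOn))
    have hMc : ContinuousOn (fun q : EuclideanSpace ℝ (Fin p) × ℝ => M q.1 q.2) S := by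
      have hM_eq : ∀ θ t, M θ t =
          (((0 : EuclideanSpace ℝ (Fin n) →L[ℝ] ℝ)).prod
            ((ContinuousLinearMap.id ℝ (EuclideanSpace ℝ (Fin n))).prod
              (0 : EuclideanSpace ℝ (Fin n) →L[ℝ] EuclideanSpace ℝ (Fin p)))).comp (V θ t)
          + (0 : EuclideanSpace ℝ (Fin p) →L[ℝ] ℝ).prod
            ((0 : EuclideanSpace ℝ (Fin p) →L[ℝ] EuclideanSpace ℝ (Fin n)).prod
              (ContinuousLinearMap.id ℝ (EuclideanSpace ℝ (Fin p)))) := by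
        intro θ t
        ext w <;>
          simp [hMdef]
      have hcont : ContinuousOn (fun q : EuclideanSpace ℝ (Fin p) × ℝ =>
          (((0 : EuclideanSpace ℝ (Fin n) →L[ℝ] ℝ)).prod
            ((ContinuousLinearMap.id ℝ (EuclideanSpace ℝ (Fin n))).prod
              (0 : EuclideanSpace ℝ (Fin n) →L[ℝ] EuclideanSpace ℝ (Fin p)))).comp (V q.1 q.2)
          + (0 : EuclideanSpace ℝ (Fin p) →L[ℝ] ℝ).prod
            ((0 : EuclideanSpace ℝ (Fin p) →L[ℝ] EuclideanSpace ℝ (Fin n)).prod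
              (ContinuousLinearMap.id ℝ (EuclideanSpace ℝ (Fin p))))) S :=
        (continuousOn_const.clm_comp hVc).add continuousOn_const
      exact hcont.congr (fun q hq => hM_eq q.1 q.2)
    have hlSc : ContinuousOn (fun q : EuclideanSpace ℝ (Fin p) × ℝ => innerSL ℝ (l q.2)) S :=
      (innerSL ℝ).continuous.comp_continuousOn
        (hlc.comp continuous_snd.continuousOn (fun q hq => hq.2))
    have hl'Sc : ContinuousOn (fun q : EuclideanSpace ℝ (Fin p) × ℝ => innerSL ℝ (l' q.2)) S :=
      (innerSL ℝ).continuous.comp_continuousOn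
        (hl'.comp continuous_snd.continuousOn (fun q hq => hq.2))
    have hGc : ContinuousOn (fun q : EuclideanSpace ℝ (Fin p) × ℝ => G q.1 q.2) S := by
      have t1 := (hDγc.comp_continuousOn htriple).clm_comp hMc
      have t2 := hlSc.clm_comp ((hDfc.comp_continuousOn htriple).clm_comp hMc)
      have t3 := hl'Sc.clm_comp hVc
      exact t1.add (t2.add t3)
    have hKcomp : IsCompact (Metric.closedBall θ₀ 1 ×ˢ Set.Icc (0:ℝ) T) :=
      (isCompact_closedBall θ₀ 1).prod isCompact_Icc
    obtain ⟨C, hC⟩ := hKcomp.exists_bound_of_continuousOn (hGc.mono hKsub)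
    have hgθc : ∀ θ, ContinuousOn (fun t => g θ t) (Set.Icc (0:ℝ) T) :=
      fun θ => (hgγc θ).add (hψc θ)
    have key : HasFDerivAt (fun θ => ∫ t, g θ t ∂μ) (∫ t, G θ₀ t ∂μ) θ₀ := by
      apply hasFDerivAt_integral_of_dominated_of_fderiv_le
        (F' := fun θ t => G θ t) (bound := fun _ => C) (s := Metric.ball θ₀ 1) (Metric.ball_mem_nhds θ₀ zero_lt_one)
      · exact Filter.Eventually.of_forall (fun θ =>
          (((hgθc θ).mono Set.Ioc_subset_Icc_self).aestronglyMeasurable measurableSet_Ioc))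
      · exact (((hgθc θ₀).integrableOn_Icc).mono_set Set.Ioc_subset_Icc_self)
      · have hGslice : ContinuousOn (fun t => G θ₀ t) (Set.Icc (0:ℝ) T) := by
          have := hGc.comp (Continuous.continuousOn (continuous_const.prodMk continuous_id))
            (fun t (ht : t ∈ Set.Icc (0:ℝ) T) => ⟨Set.mem_univ θ₀, ht⟩)
          exact this
        exact ((hGslice.mono Set.Ioc_subset_Icc_self).aestronglyMeasurable measurableSet_Ioc)
      · refine (ae_restrict_iff' measurableSet_Ioc).mpr (Filter.Eventually.of_forall ?_)
        intro t ht θ hθ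
        exact hC (θ, t) ⟨Metric.ball_subset_closedBall hθ, Set.Ioc_subset_Icc_self ht⟩
      · refine (integrableOn_const_iff).mpr (Or.inr ?_)
        rw [Real.volume_Ioc]
        exact ENNReal.ofReal_lt_top
      · refine (ae_restrict_iff' measurableSet_Ioc).mpr (Filter.Eventually.of_forall ?_)
        intro t ht θ hθ
        exact h_diff t (Set.Ioc_subset_Icc_self ht) θ
    have hfun : (fun θ => ∫ t in (0:ℝ)..T, g θ t) = fun θ => ∫ t, g θ t ∂μ := by
      funext θ
      exact intervalIntegral.integral_of_le hT'
    rw [hfun]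
    convert key using 1
    rw [intervalIntegral.integral_of_le hT']
    apply MeasureTheory.setIntegral_congr_fun measurableSet_Ioc
    intro t ht
    dsimp only
    have htI : t ∈ Set.Icc (0:ℝ) T := Set.Ioc_subset_Icc_self ht
    have hQγ : HasFDerivAt (fun y => γ t y θ₀)
        ((Dγ (t, x θ₀ t, θ₀)).comp ((0 : EuclideanSpace ℝ (Fin n) →L[ℝ] ℝ).prod
          ((ContinuousLinearMap.id ℝ (EuclideanSpace ℝ (Fin n))).prod
            (0 : EuclideanSpace ℝ (Fin n) →L[ℝ] EuclideanSpace ℝ (Fin p))))) (x θ₀ t) :=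
      by
      have hin : HasFDerivAt (fun y : EuclideanSpace ℝ (Fin n) =>
          ((t, y, θ₀) : ℝ × EuclideanSpace ℝ (Fin n) × EuclideanSpace ℝ (Fin p)))
          ((0 : EuclideanSpace ℝ (Fin n) →L[ℝ] ℝ).prod
            ((ContinuousLinearMap.id ℝ (EuclideanSpace ℝ (Fin n))).prod
              (0 : EuclideanSpace ℝ (Fin n) →L[ℝ] EuclideanSpace ℝ (Fin p)))) (x θ₀ t) :=
        (hasFDerivAt_const t _).prodMk ((hasFDerivAt_id _).prodMk (hasFDerivAt_const θ₀ _))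
      exact (hγd _).comp _ hin
    have hQf : HasFDerivAt (fun y => f t y θ₀)
        ((Df (t, x θ₀ t, θ₀)).comp ((0 : EuclideanSpace ℝ (Fin n) →L[ℝ] ℝ).prod
          ((ContinuousLinearMap.id ℝ (EuclideanSpace ℝ (Fin n))).prod
            (0 : EuclideanSpace ℝ (Fin n) →L[ℝ] EuclideanSpace ℝ (Fin p))))) (x θ₀ t) :=
      by
      have hin : HasFDerivAt (fun y : EuclideanSpace ℝ (Fin n) =>
          ((t, y, θ₀) : ℝ × EuclideanSpace ℝ (Fin n) × EuclideanSpace ℝ (Fin p)))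
          ((0 : EuclideanSpace ℝ (Fin n) →L[ℝ] ℝ).prod
            ((ContinuousLinearMap.id ℝ (EuclideanSpace ℝ (Fin n))).prod
              (0 : EuclideanSpace ℝ (Fin n) →L[ℝ] EuclideanSpace ℝ (Fin p)))) (x θ₀ t) :=
        (hasFDerivAt_const t _).prodMk ((hasFDerivAt_id _).prodMk (hasFDerivAt_const θ₀ _))
      exact (hfd _).comp _ hin
    have hPγ : HasFDerivAt (fun θ => γ t (x θ₀ t) θ)
        ((Dγ (t, x θ₀ t, θ₀)).comp ((0 : EuclideanSpace ℝ (Fin p) →L[ℝ] ℝ).prod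
          ((0 : EuclideanSpace ℝ (Fin p) →L[ℝ] EuclideanSpace ℝ (Fin n)).prod
            (ContinuousLinearMap.id ℝ (EuclideanSpace ℝ (Fin p)))))) θ₀ :=
      by
      have hin : HasFDerivAt (fun θ : EuclideanSpace ℝ (Fin p) =>
          ((t, x θ₀ t, θ) : ℝ × EuclideanSpace ℝ (Fin n) × EuclideanSpace ℝ (Fin p)))
          ((0 : EuclideanSpace ℝ (Fin p) →L[ℝ] ℝ).prod
            ((0 : EuclideanSpace ℝ (Fin p) →L[ℝ] EuclideanSpace ℝ (Fin n)).prod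
              (ContinuousLinearMap.id ℝ (EuclideanSpace ℝ (Fin p))))) θ₀ :=
        (hasFDerivAt_const t _).prodMk ((hasFDerivAt_const (x θ₀ t) _).prodMk (hasFDerivAt_id _))
      exact (hγd _).comp _ hin
    have hPf : HasFDerivAt (fun θ => f t (x θ₀ t) θ)
        ((Df (t, x θ₀ t, θ₀)).comp ((0 : EuclideanSpace ℝ (Fin p) →L[ℝ] ℝ).prod
          ((0 : EuclideanSpace ℝ (Fin p) →L[ℝ] EuclideanSpace ℝ (Fin n)).prod
            (ContinuousLinearMap.id ℝ (EuclideanSpace ℝ (Fin p)))))) θ₀ :=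
      by
      have hin : HasFDerivAt (fun θ : EuclideanSpace ℝ (Fin p) =>
          ((t, x θ₀ t, θ) : ℝ × EuclideanSpace ℝ (Fin n) × EuclideanSpace ℝ (Fin p)))
          ((0 : EuclideanSpace ℝ (Fin p) →L[ℝ] ℝ).prod
            ((0 : EuclideanSpace ℝ (Fin p) →L[ℝ] EuclideanSpace ℝ (Fin n)).prod
              (ContinuousLinearMap.id ℝ (EuclideanSpace ℝ (Fin p))))) θ₀ :=
        (hasFDerivAt_const t _).prodMk ((hasFDerivAt_const (x θ₀ t) _).prodMk (hasFDerivAt_id _))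
      exact (hfd _).comp _ hin
    have hadjt := hadj t htI
    rw [hQγ.fderiv, hQf.fderiv] at hadjt
    rw [hPγ.fderiv, hPf.fderiv, hGdef]
    simp only
    rw [hMdef]
    simp only
    rw [clm_split₃ (Dγ (t, x θ₀ t, θ₀)) (V θ₀ t), clm_split₃ (Df (t, x θ₀ t, θ₀)) (V θ₀ t),
      hadjt]
    simp only [ContinuousLinearMap.comp_add, ContinuousLinearMap.sub_comp,
      ContinuousLinearMap.neg_comp, ContinuousLinearMap.comp_assoc]
    abel
  have hsum := hA.add hB
  exact hsum.congr_fderiv (add_comm _ _)
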